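/- Theorem 3.1, direction (i) ⇒ (iii): Suppose c : [0,∞) → ℝ^d_{>0} is differentiable, solves the mass-action ODE c'(t) = Σ_k κ_k c(t)^{y_k} ζ_k with c(0) = c̃ ∈ ℝ^d_{>0}, and satisfies the DR condition. Then the function P(x,t) := ∏_{i=1}^d e^{−c_i(t)} c_i(t)^{x_i}/x_i! solves the chemical master equation, and its initial condition is P(x,0) = ∏_{i=1}^d e^{−c̃_i} c̃_i^{x_i}/x_i!. -/

import Mathlib

open Finset

/-- Monomial `u^v = ∏ i, u i ^ v i` (with the convention `0^0 = 1`). -/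
noncomputable def monPow {d : ℕ} (u : Fin d → ℝ) (v : Fin d → ℕ) : ℝ :=
  ∏ i, u i ^ v i

/-- The reaction vector `ζ = y' - y`, viewed as a real vector. -/
def zetaVec {d : ℕ} (y y' : Fin d → ℕ) : Fin d → ℝ :=
  fun i => (y' i : ℝ) - (y i : ℝ)

/-- Stochastic mass action intensity `λ_k(x) = κ_k ∏_i x_i!/(x_i - y_{ki})!`,
taken to be `0` when `x` is not componentwise at least `y_k`. -/
noncomputable def intensity {d : ℕ} (κk : ℝ) (yk : Fin d → ℕ) (x : Fin d → ℕ) : ℝ :=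
  κk * ∏ i, ((x i).descFactorial (yk i) : ℝ)

/-- Right-hand side of the deterministic mass-action ODE: `Σ_k κ_k c^{y_k} ζ_k`. -/
noncomputable def massActionRHS {d K : ℕ} (κ : Fin K → ℝ) (y y' : Fin K → Fin d → ℕ)
    (c : Fin d → ℝ) : Fin d → ℝ :=
  ∑ k, (κ k * monPow c (y k)) • zetaVec (y k) (y' k)

/-- `c` is differentiable on `[0,∞)` and solves the mass-action ODE there. -/
def solvesMassAction {d K : ℕ} (κ : Fin K → ℝ) (y y' : Fin K → Fin d → ℕ)
    (c : ℝ → Fin d → ℝ) : Prop :=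
  ∀ t ≥ (0:ℝ), HasDerivWithinAt c (massActionRHS κ y y' (c t)) (Set.Ici 0) t

/-- The dynamical and restricted (DR) complex balance condition: for every complex `z`
with `‖z‖₁ ≥ 2` and every `t ≥ 0`,
`Σ_{k : y_k = z} κ_k c(t)^z = Σ_{k : y'_k = z} κ_k c(t)^{y_k}`. -/
def DRcondition {d K : ℕ} (κ : Fin K → ℝ) (y y' : Fin K → Fin d → ℕ)
    (c : ℝ → Fin d → ℝ) : Prop :=
  ∀ z : Fin d → ℕ, 2 ≤ ∑ i, z i → ∀ t ≥ (0:ℝ),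
    ∑ k ∈ univ.filter (fun k => y k = z), κ k * monPow (c t) z
      = ∑ k ∈ univ.filter (fun k => y' k = z), κ k * monPow (c t) (y k)

/-- `P` solves the chemical master equation on `[0,∞)`:
`∂ₜ P(x,t) = Σ_k λ_k(x-ζ_k) P(x-ζ_k,t) 1{x-ζ_k ≥ 0} - Σ_k λ_k(x) P(x,t)`. -/
def solvesCME {d K : ℕ} (κ : Fin K → ℝ) (y y' : Fin K → Fin d → ℕ)
    (P : (Fin d → ℕ) → ℝ → ℝ) : Prop :=
  ∀ x : Fin d → ℕ, ∀ t ≥ (0:ℝ),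
    HasDerivWithinAt (P x)
      ((∑ k, if ∀ i, y' k i ≤ x i + y k i then
          intensity (κ k) (y k) (fun i => x i + y k i - y' k i)
            * P (fun i => x i + y k i - y' k i) t
        else 0)
       - ∑ k, intensity (κ k) (y k) x * P x t)
      (Set.Ici 0) t

/-- The product-Poisson probability mass function `∏_i e^{-c_i} c_i^{x_i}/x_i!`. -/
noncomputable def productPoisson {d : ℕ} (c : Fin d → ℝ) (x : Fin d → ℕ) : ℝ :=
  ∏ i, Real.exp (-(c i)) * (c i) ^ (x i) / (x i).factorial

lemma poisson_coord_deriv (n : ℕ) {u' : ℝ} {f : ℝ → ℝ} {s : Set ℝ} {t : ℝ}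
    (hu : 0 < f t) (hf : HasDerivWithinAt f u' s t) :
    HasDerivWithinAt (fun r => Real.exp (-(f r)) * (f r) ^ n / n.factorial)
      ((Real.exp (-(f t)) * (f t) ^ n / n.factorial) * (((n : ℝ) / f t) - 1) * u') s t := by
  have h1 : HasDerivWithinAt (fun r => Real.exp (-(f r)) * (f r) ^ n / n.factorial)
      (((Real.exp (-(f t)) * (-u')) * (f t) ^ n
        + Real.exp (-(f t)) * ((n : ℝ) * (f t) ^ (n - 1) * u')) / n.factorial) s t :=
    ((hf.neg.exp.mul (hf.pow (n := n))).div_const _)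
  convert h1 using 1
  have hfne : f t ≠ 0 := ne_of_gt hu
  have hne : ((n.factorial : ℝ)) ≠ 0 := by positivity
  have hpow : (n : ℝ) * (f t) ^ (n - 1) * f t = (n : ℝ) * (f t) ^ n := by
    cases n with
    | zero => simp
    | succ m => rw [pow_succ]; push_cast; ring_nf
  field_simp
  linear_combination (-u') * hpow

lemma key_coord {u : ℝ} (hu : 0 < u) (n a b : ℕ) (h : b ≤ n + a) :
    (((n + a - b).descFactorial a : ℝ)) * (Real.exp (-u) * u ^ (n + a - b) / (n + a - b).factorial)
      = (Real.exp (-u) * u ^ n / n.factorial) * (u ^ a * ((n.descFactorial b : ℝ) / u ^ b)) := by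
  rcases le_or_gt b n with hb | hb
  · obtain ⟨m, rfl⟩ := Nat.exists_eq_add_of_le hb
    have h1 : b + m + a - b = m + a := by omega
    rw [h1]
    have hd1 : ((m + a).descFactorial a : ℝ) = ((m+a).factorial : ℝ) / (m.factorial : ℝ) := by
      have := Nat.factorial_mul_descFactorial (Nat.le_add_left a m)
      have h2 : m + a - a = m := by omega
      rw [h2] at this
      field_simp
      rw [mul_comm]
      exact_mod_cast this
    have hd2 : ((b + m).descFactorial b : ℝ) = ((b+m).factorial : ℝ) / (m.factorial : ℝ) := by
      have := Nat.factorial_mul_descFactorial (Nat.le_add_right b m)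
      have h2 : b + m - b = m := by omega
      rw [h2] at this
      field_simp
      rw [mul_comm]
      exact_mod_cast this
    rw [hd1, hd2]
    have hfm : (m.factorial : ℝ) ≠ 0 := by positivity
    have hfma : ((m+a).factorial : ℝ) ≠ 0 := by positivity
    have hfbm : ((b+m).factorial : ℝ) ≠ 0 := by positivity
    have hune : u ≠ 0 := ne_of_gt hu
    field_simp
    rw [pow_add, pow_add]
    ring
  · have h1 : (n + a - b) < a := by omega
    rw [Nat.descFactorial_eq_zero_iff_lt.mpr h1]
    rw [Nat.descFactorial_eq_zero_iff_lt.mpr hb]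
    simp

/-- Theorem 3.1, (i) ⇒ (iii): if `c > 0` is differentiable, solves the mass-action ODE with
`c(0) = c̃`, and satisfies the DR condition, then the product-Poisson function
`P(x,t) = ∏_i e^{-c_i(t)} c_i(t)^{x_i}/x_i!` solves the chemical master equation, with initial
condition the product-Poisson distribution with parameter `c̃`. -/
theorem DR_implies_productPoisson_solution
    {d K : ℕ} (κ : Fin K → ℝ) (y y' : Fin K → Fin d → ℕ)
    (hκ : ∀ k, 0 ≤ κ k) (hyy' : ∀ k, y' k ≠ y k)
    (ctilde : Fin d → ℝ) (hctilde : ∀ i, 0 < ctilde i)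
    (c : ℝ → Fin d → ℝ) (hcpos : ∀ t ≥ (0:ℝ), ∀ i, 0 < c t i)
    (hc0 : c 0 = ctilde)
    (hODE : solvesMassAction κ y y' c)
    (hDR : DRcondition κ y y' c) :
    solvesCME κ y y' (fun x t => productPoisson (c t) x)
      ∧ ∀ x : Fin d → ℕ, productPoisson (c 0) x = productPoisson ctilde x := by
  refine ⟨?_, fun x => by rw [hc0]⟩
  intro x t ht
  have hpos : ∀ i, 0 < c t i := hcpos t ht
  have hcne : ∀ i, c t i ≠ 0 := fun i => ne_of_gt (hpos i)
  have hder := hasDerivWithinAt_pi.mp (hODE t ht)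
  set r : Fin d → ℝ := massActionRHS κ y y' (c t) with hrdef
  set Pois : Fin d → ℝ → ℝ :=
    fun i s => Real.exp (-(c s i)) * (c s i) ^ (x i) / (x i).factorial with hPois
  have hgi : ∀ i : Fin d, HasDerivWithinAt (Pois i)
      ((Pois i t) * (((x i : ℝ) / c t i) - 1) * r i) (Set.Ici 0) t :=
    fun i => poisson_coord_deriv (x i) (hpos i) (hder i)
  have hP := HasDerivWithinAt.finset_prod (u := (univ : Finset (Fin d))) (fun i _ => hgi i)
  -- abbreviations for the algebra
  set P : ℝ := productPoisson (c t) x with hPdef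
  have hPprod : P = ∏ j, Pois j t := rfl
  set w : Fin K → ℝ := fun k => κ k * monPow (c t) (y k) with hwdef
  set G : (Fin d → ℕ) → ℝ :=
    fun z => ∏ i, (((x i).descFactorial (z i) : ℝ) / (c t i) ^ (z i)) with hGdef
  set H : (Fin d → ℕ) → ℝ :=
    fun z => ∑ i, (((x i : ℝ) / c t i) - 1) * (z i : ℝ) with hHdef
  -- loss terms
  have hloss : ∀ k, intensity (κ k) (y k) x * P = P * (w k * G (y k)) := by
    intro k
    have : w k * G (y k) = κ k * ∏ i, ((x i).descFactorial (y k i) : ℝ) := by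
      simp only [hwdef, hGdef, monPow]
      rw [mul_assoc, ← Finset.prod_mul_distrib]
      congr 1
      refine Finset.prod_congr rfl fun i _ => ?_
      rw [mul_comm]
      exact div_mul_cancel₀ _ (pow_ne_zero _ (hcne i))
    rw [this, intensity]; ring
  -- gain terms
  have hgain : ∀ k, (if ∀ i, y' k i ≤ x i + y k i then
        intensity (κ k) (y k) (fun i => x i + y k i - y' k i)
          * productPoisson (c t) (fun i => x i + y k i - y' k i)
      else 0) = P * (w k * G (y' k)) := by
    intro k
    by_cases hind : ∀ i, y' k i ≤ x i + y k i
    · rw [if_pos hind]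
      rw [intensity, productPoisson, mul_assoc, ← Finset.prod_mul_distrib]
      have hco : ∀ i : Fin d,
          (((x i + y k i - y' k i).descFactorial (y k i) : ℝ)) *
            (Real.exp (-(c t i)) * (c t i) ^ (x i + y k i - y' k i) / (x i + y k i - y' k i).factorial)
          = (Real.exp (-(c t i)) * (c t i) ^ (x i) / (x i).factorial) *
            ((c t i) ^ (y k i) * (((x i).descFactorial (y' k i) : ℝ) / (c t i) ^ (y' k i))) :=
        fun i => key_coord (hpos i) (x i) (y k i) (y' k i) (hind i)
      rw [Finset.prod_congr rfl (fun i _ => hco i)]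
      rw [Finset.prod_mul_distrib, Finset.prod_mul_distrib]
      simp only [hPdef, productPoisson, hwdef, hGdef, monPow]
      ring
    · rw [if_neg hind]
      push_neg at hind
      obtain ⟨i, hi⟩ := hind
      have hG0 : G (y' k) = 0 := by
        rw [hGdef]
        refine Finset.prod_eq_zero (mem_univ i) ?_
        rw [Nat.descFactorial_eq_zero_iff_lt.mpr (by omega)]
        simp
      rw [hG0]; ring
  -- the ψ function and the DR step
  set ψ : (Fin d → ℕ) → ℝ := fun z => G z - H z - 1 with hψdef
  have hψ0 : ∀ z : Fin d → ℕ, (∑ i, z i) ≤ 1 → ψ z = 0 := by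
    intro z hz
    rcases Nat.le_one_iff_eq_zero_or_eq_one.mp hz with h0 | h1
    · have hz0 : ∀ i, z i = 0 := fun i =>
        (Finset.sum_eq_zero_iff.mp h0) i (mem_univ i)
      simp [hψdef, hGdef, hHdef, hz0]
    · have hex : ∃ j, z j ≠ 0 := by
        by_contra hcon
        push_neg at hcon
        simp [hcon] at h1
      obtain ⟨j, hj⟩ := hex
      have hle : z j ≤ 1 := h1 ▸ Finset.single_le_sum (f := z) (fun i _ => Nat.zero_le _) (mem_univ j)
      have hj1 : z j = 1 := by omega
      have hj0 : ∀ i, i ≠ j → z i = 0 := by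
        intro i hij
        have hsplit := Finset.add_sum_erase univ z (mem_univ j)
        have hrest : ∑ i ∈ univ.erase j, z i = 0 := by omega
        exact Finset.sum_eq_zero_iff.mp hrest i (Finset.mem_erase.mpr ⟨hij, mem_univ i⟩)
      have hg : G z = (x j : ℝ) / c t j := by
        simp only [hGdef]
        rw [Finset.prod_eq_single j (fun i _ hij => by simp [hj0 i hij]) (by simp)]
        simp [hj1]
      have hh : H z = (x j : ℝ) / c t j - 1 := by
        simp only [hHdef]
        rw [Finset.sum_eq_single j (fun i _ hij => by simp [hj0 i hij]) (by simp)]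
        simp [hj1]
      simp only [hψdef]; rw [hg, hh]; ring
  have key : ∑ k, w k * ψ (y' k) = ∑ k, w k * ψ (y k) := by
    have hmapsY : ∀ k ∈ (univ : Finset (Fin K)),
        y k ∈ (univ.image y ∪ univ.image y' : Finset (Fin d → ℕ)) :=
      fun k _ => mem_union_left _ (mem_image_of_mem y (mem_univ k))
    have hmapsY' : ∀ k ∈ (univ : Finset (Fin K)),
        y' k ∈ (univ.image y ∪ univ.image y' : Finset (Fin d → ℕ)) :=
      fun k _ => mem_union_right _ (mem_image_of_mem y' (mem_univ k))
    rw [← Finset.sum_fiberwise_of_maps_to hmapsY' (fun k => w k * ψ (y' k)),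
        ← Finset.sum_fiberwise_of_maps_to hmapsY (fun k => w k * ψ (y k))]
    refine Finset.sum_congr rfl fun z _ => ?_
    have h1 : ∑ k ∈ univ.filter (fun k => y' k = z), w k * ψ (y' k)
        = ψ z * ∑ k ∈ univ.filter (fun k => y' k = z), κ k * monPow (c t) (y k) := by
      rw [Finset.mul_sum]
      refine Finset.sum_congr rfl fun k hk => ?_
      have hyz := (Finset.mem_filter.mp hk).2
      simp only [hwdef, hyz]; ring
    have h2 : ∑ k ∈ univ.filter (fun k => y k = z), w k * ψ (y k)
        = ψ z * ∑ k ∈ univ.filter (fun k => y k = z), κ k * monPow (c t) z := by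
      rw [Finset.mul_sum]
      refine Finset.sum_congr rfl fun k hk => ?_
      have hyz := (Finset.mem_filter.mp hk).2
      simp only [hwdef, hyz]; ring
    rw [h1, h2]
    rcases le_or_gt (∑ i, z i) 1 with hz1 | hz2
    · rw [hψ0 z hz1]; ring
    · rw [hDR z hz2 t ht]
  have hGH : ∑ k, w k * (G (y' k) - G (y k)) = ∑ k, w k * (H (y' k) - H (y k)) := by
    have expand : ∀ k, w k * (G (y' k) - G (y k))
        = (w k * ψ (y' k) - w k * ψ (y k)) + w k * (H (y' k) - H (y k)) := by
      intro k; simp only [hψdef]; ring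
    rw [Finset.sum_congr rfl fun k _ => expand k, Finset.sum_add_distrib,
        Finset.sum_sub_distrib, key, sub_self, zero_add]
  -- value of the CME right-hand side
  have hBIG : ((∑ k, if ∀ i, y' k i ≤ x i + y k i then
          intensity (κ k) (y k) (fun i => x i + y k i - y' k i)
            * productPoisson (c t) (fun i => x i + y k i - y' k i)
        else 0)
       - ∑ k, intensity (κ k) (y k) x * productPoisson (c t) x)
      = ∑ i, (∏ j ∈ univ.erase i, Pois j t) •
          ((Pois i t) * (((x i : ℝ) / c t i) - 1) * r i) := by
    rw [Finset.sum_congr rfl fun k _ => hgain k,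
        Finset.sum_congr rfl fun k _ => hloss k]
    rw [← Finset.sum_sub_distrib]
    have lhs_eq : ∑ k, (P * (w k * G (y' k)) - P * (w k * G (y k)))
        = P * ∑ k, w k * (G (y' k) - G (y k)) := by
      rw [Finset.mul_sum]
      refine Finset.sum_congr rfl fun k _ => ?_; ring
    rw [lhs_eq, hGH]
    -- now the right side
    have rhs_eq : ∀ i : Fin d, (∏ j ∈ univ.erase i, Pois j t) •
          ((Pois i t) * (((x i : ℝ) / c t i) - 1) * r i)
        = P * ((((x i : ℝ) / c t i) - 1) * r i) := by
      intro i
      rw [smul_eq_mul, hPprod, ← Finset.prod_erase_mul univ _ (mem_univ i)]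
      ring
    rw [Finset.sum_congr rfl fun i _ => rhs_eq i, ← Finset.mul_sum]
    congr 1
    -- ∑ k, w k * (H (y' k) - H (y k)) = ∑ i, ((x i)/c t i - 1) * r i
    have hri : ∀ i, r i = ∑ k, w k * (((y' k i : ℝ)) - (y k i : ℝ)) := by
      intro i
      rw [hrdef, massActionRHS]
      rw [Finset.sum_apply]
      refine Finset.sum_congr rfl fun k _ => ?_
      rw [Pi.smul_apply, smul_eq_mul, zetaVec, hwdef]
    have step : ∑ i, ((((x i : ℝ)) / c t i) - 1) * r i
        = ∑ i : Fin d, ∑ k : Fin K,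
            ((((x i : ℝ)) / c t i) - 1) * (w k * (((y' k i : ℝ)) - (y k i : ℝ))) := by
      refine Finset.sum_congr rfl fun i _ => ?_
      rw [hri i, Finset.mul_sum]
    rw [step, Finset.sum_comm]
    refine Finset.sum_congr rfl fun k _ => ?_
    simp only [hHdef]
    rw [← Finset.sum_sub_distrib, Finset.mul_sum]
    refine Finset.sum_congr rfl fun i _ => ?_
    ring
  rw [hBIG]
  have hfun : (fun s => productPoisson (c s) x) = ∏ i, Pois i := by
    funext s
    rw [Finset.prod_apply]
    rfl
  show HasDerivWithinAt (fun s => productPoisson (c s) x) _ _ _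
  rw [hfun]
  exact hP
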